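/- With S a sublattice of 2^{Fin n} containing ∅ and Fin n, Z_i := ⋃{S ∈ S : i ∉ S}, and α^ε defined by α^ε_i(z) = z_i + ε∑_{j ∉ Z_i} z_j for ε > 0, one has α^ε(F_{≥0}ⁿ) ⊆ U⁺, where U⁺ = ⋃_{S ∈ S} F_{>0}^S·0^{S^c} (vectors strictly positive on S, zero off S). -/

import Mathlib

set_option maxHeartbeats 1000000
open Classical

noncomputable def alphaMap (F : Subfield ℝ) (n : ℕ) (𝒮 : Set (Set (Fin n))) (ε : F)
    (z : Fin n → F) : Fin n → F :=
  fun i => z i + ε * ∑ j ∈ Finset.univ.filter (fun j => j ∉ ⋃₀ {S ∈ 𝒮 | i ∉ S}), z j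


lemma sUnion_mem_aux {n : ℕ} (𝒮 : Set (Set (Fin n)))
    (hempty : ∅ ∈ 𝒮) (hcup : ∀ S₁ ∈ 𝒮, ∀ S₂ ∈ 𝒮, S₁ ∪ S₂ ∈ 𝒮)
    (T : Set (Set (Fin n))) (hT : T ⊆ 𝒮) : ⋃₀ T ∈ 𝒮 := by
  have hfin : T.Finite := Set.toFinite T
  refine Set.Finite.induction_on (motive := fun T _ => T ⊆ 𝒮 → ⋃₀ T ∈ 𝒮) T hfin (fun _ => by simpa using hempty) ?_ hT
  intro a s _ _ ih hT'
  rw [Set.sUnion_insert]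
  exact hcup a (hT' (Set.mem_insert a s)) _ (ih (fun x hx => hT' (Set.mem_insert_of_mem a hx)))

lemma sInter_mem_aux {n : ℕ} (𝒮 : Set (Set (Fin n)))
    (huniv : Set.univ ∈ 𝒮) (hcap : ∀ S₁ ∈ 𝒮, ∀ S₂ ∈ 𝒮, S₁ ∩ S₂ ∈ 𝒮)
    (T : Set (Set (Fin n))) (hT : T ⊆ 𝒮) : ⋂₀ T ∈ 𝒮 := by
  have hfin : T.Finite := Set.toFinite T
  refine Set.Finite.induction_on (motive := fun T _ => T ⊆ 𝒮 → ⋂₀ T ∈ 𝒮) T hfin (fun _ => by simpa using huniv) ?_ hT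
  intro a s _ _ ih hT'
  rw [Set.sInter_insert]
  exact hcap a (hT' (Set.mem_insert a s)) _ (ih (fun x hx => hT' (Set.mem_insert_of_mem a hx)))

theorem stmt9 (F : Subfield ℝ) (n : ℕ) (𝒮 : Set (Set (Fin n)))
    (hempty : ∅ ∈ 𝒮) (huniv : Set.univ ∈ 𝒮)
    (hcup : ∀ S₁ ∈ 𝒮, ∀ S₂ ∈ 𝒮, S₁ ∪ S₂ ∈ 𝒮)
    (hcap : ∀ S₁ ∈ 𝒮, ∀ S₂ ∈ 𝒮, S₁ ∩ S₂ ∈ 𝒮)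
    (ε : F) (hε : 0 < ε) :
    ∀ z : Fin n → F, (∀ i, 0 ≤ z i) →
      alphaMap F n 𝒮 ε z ∈ {x : Fin n → F | ∃ S ∈ 𝒮, (∀ i ∈ S, 0 < x i) ∧ ∀ i ∉ S, x i = 0} := by
  intro z hz
  -- S_z : smallest member containing support
  set Sz : Set (Fin n) := ⋂₀ {S ∈ 𝒮 | ∀ j, z j ≠ 0 → j ∈ S} with hSz
  have hSzmem : Sz ∈ 𝒮 := sInter_mem_aux 𝒮 huniv hcap _ (fun S hS => hS.1)
  have hsupp : ∀ j, z j ≠ 0 → j ∈ Sz := fun j hj => by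
    intro S hS; exact hS.2 j hj
  -- Z_i
  have hZmem : ∀ i, (⋃₀ {S ∈ 𝒮 | i ∉ S}) ∈ 𝒮 := fun i =>
    sUnion_mem_aux 𝒮 hempty hcup _ (fun S hS => hS.1)
  have hiZ : ∀ i, i ∉ ⋃₀ {S ∈ 𝒮 | i ∉ S} := by
    intro i hi
    obtain ⟨S, hS, hiS⟩ := hi
    exact hS.2 hiS
  refine ⟨Sz, hSzmem, ?_, ?_⟩
  · intro i hi
    set Zi := ⋃₀ {S ∈ 𝒮 | i ∉ S} with hZi
    have hsum0 : (0:F) ≤ ∑ j ∈ Finset.univ.filter (fun j => j ∉ Zi), z j :=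
      Finset.sum_nonneg fun j _ => hz j
    rcases lt_or_eq_of_le (hz i) with h | h
    · have : (0:F) ≤ ε * ∑ j ∈ Finset.univ.filter (fun j => j ∉ Zi), z j :=
        mul_nonneg hε.le hsum0
      show 0 < z i + ε * ∑ j ∈ Finset.univ.filter (fun j => j ∉ Zi), z j
      exact add_pos_of_pos_of_nonneg h this
    · -- z i = 0, need a positive term with j ∉ Zi
      have hns : ¬ (∀ j, z j ≠ 0 → j ∈ Zi) := by
        intro hsub
        have : Sz ⊆ Zi := Set.sInter_subset_of_mem ⟨hZmem i, hsub⟩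
        exact hiZ i (this hi)
      push_neg at hns
      obtain ⟨j, hj0, hjZ⟩ := hns
      have hjpos : 0 < z j := lt_of_le_of_ne (hz j) (Ne.symm hj0)
      have hsum : 0 < ∑ j ∈ Finset.univ.filter (fun j => j ∉ Zi), z j := by
        refine lt_of_lt_of_le hjpos (Finset.single_le_sum (fun k _ => hz k) ?_)
        simp [hjZ]
      have : 0 < ε * ∑ j ∈ Finset.univ.filter (fun j => j ∉ Zi), z j := mul_pos hε hsum
      show 0 < z i + ε * ∑ j ∈ Finset.univ.filter (fun j => j ∉ Zi), z j
      rw [← h]; simpa using this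
  · intro i hi
    set Zi := ⋃₀ {S ∈ 𝒮 | i ∉ S} with hZi
    have hzi : z i = 0 := by
      by_contra h; exact hi (hsupp i h)
    have hSzZ : Sz ⊆ Zi := Set.subset_sUnion_of_mem ⟨hSzmem, hi⟩
    have hsum : ∑ j ∈ Finset.univ.filter (fun j => j ∉ Zi), z j = 0 := by
      refine Finset.sum_eq_zero fun j hj => ?_
      by_contra h
      exact (Finset.mem_filter.mp hj).2 (hSzZ (hsupp j h))
    show z i + ε * ∑ j ∈ Finset.univ.filter (fun j => j ∉ Zi), z j = 0
    rw [hzi, hsum]; ring
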